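/- Let m ≥ 1, let 0 < ε ≤ 2, and let P be a probability distribution on Fin m such that ∑_{z} |P z − 1/m| ≥ ε (i.e. P is ε-far from uniform in L₁-distance). Then ∑_{z} P z · min(3/m, P z) ≥ (1 + ε²/4)/m. -/

import Mathlib

open Finset

/-- Second item of Lemma `cl:conc`: if `P` is `ε`-far from uniform in `L₁`,
then the expectation `∑ z, P z · min(3/m, P z)` of the truncated probability of
a single sample is at least `(1 + ε²/4)/m`. -/
theorem truncated_expectation_far_case (m : ℕ) (hm : 1 ≤ m) (ε : ℝ)
    (hε₀ : 0 < ε) (hε₂ : ε ≤ 2)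
    (P : Fin m → ℝ) (hP : ∀ j, 0 ≤ P j) (hPsum : ∑ j, P j = 1)
    (hfar : ε ≤ ∑ z, |P z - 1 / m|) :
    (1 + ε ^ 2 / 4) / m ≤ ∑ z, P z * min (3 / (m:ℝ)) (P z) := by
  have hm0 : (0:ℝ) < m := by exact_mod_cast Nat.lt_of_lt_of_le Nat.zero_lt_one hm
  set u : ℝ := 1 / m with hu
  have hu0 : 0 < u := by positivity
  -- pointwise bound
  have key : ∀ z, u * P z + u * (P z - u) + min ((P z - u)^2) (u * |P z - u|)
      ≤ P z * min (3 / (m:ℝ)) (P z) := by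
    intro z
    have h3u : (3 : ℝ) / m = 3 * u := by rw [hu]; ring
    rcases le_or_gt (P z) (3 * u) with h | h
    · rw [h3u, min_eq_right h]
      have hmin : min ((P z - u)^2) (u * |P z - u|) ≤ (P z - u)^2 := min_le_left _ _
      nlinarith [hP z]
    · rw [h3u, min_eq_left h.le]
      have hd : u ≤ P z - u := by nlinarith
      have habs : |P z - u| = P z - u := abs_of_nonneg (by nlinarith)
      have hmin : min ((P z - u)^2) (u * |P z - u|) = u * (P z - u) := by
        rw [habs]; exact min_eq_right (by nlinarith)
      rw [hmin]; nlinarith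
  have hsum := Finset.sum_le_sum (s := Finset.univ) (fun z _ => key z)
  -- sum of deltas is zero
  have hδ : ∑ z, (P z - u) = 0 := by
    rw [Finset.sum_sub_distrib, hPsum, Finset.sum_const, Finset.card_univ,
      Fintype.card_fin, hu, nsmul_eq_mul]
    field_simp
    norm_num
  -- bound on the min-sum
  set M := ∑ z, min ((P z - u)^2) (u * |P z - u|) with hM
  have hMbound : ε ^ 2 / 4 * u ≤ M := by
    classical
    set S := Finset.univ.filter (fun z : Fin m => |P z - u| ≤ u) with hS
    set s := ∑ z ∈ S, |P z - u| with hs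
    set t := ∑ z ∈ Sᶜ, |P z - u| with ht
    have hst : ε ≤ s + t := by
      rw [hs, ht, Finset.sum_add_sum_compl]
      exact hfar
    have hs0 : 0 ≤ s := Finset.sum_nonneg fun z _ => abs_nonneg _
    have ht0 : 0 ≤ t := Finset.sum_nonneg fun z _ => abs_nonneg _
    set A := ∑ z ∈ S, (P z - u)^2 with hA
    set B := ∑ z ∈ Sᶜ, u * |P z - u| with hB
    have hsplit : M = A + B := by
      rw [hM, hA, hB, ← Finset.sum_add_sum_compl S]
      congr 1
      · apply Finset.sum_congr rfl
        intro z hz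
        rw [hS, Finset.mem_filter] at hz
        have h2 := hz.2
        have : (P z - u)^2 ≤ u * |P z - u| := by
          nlinarith [sq_abs (P z - u), abs_nonneg (P z - u)]
        exact min_eq_left this
      · apply Finset.sum_congr rfl
        intro z hz
        rw [hS, Finset.compl_filter, Finset.mem_filter] at hz
        have h2 : u < |P z - u| := not_le.mp hz.2
        have : u * |P z - u| ≤ (P z - u)^2 := by
          nlinarith [sq_abs (P z - u)]
        exact min_eq_right this
    have hCS : s ^ 2 ≤ m * A := by
      rw [hs, hA]
      have h1 := sq_sum_le_card_mul_sum_sq (s := S) (f := fun z => |P z - u|)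
      have hcard : (S.card : ℝ) ≤ m := by
        have := Finset.card_le_card (Finset.subset_univ S)
        simp only [Finset.card_univ, Fintype.card_fin] at this
        exact_mod_cast this
      calc (∑ z ∈ S, |P z - u|) ^ 2 ≤ (S.card : ℝ) * ∑ z ∈ S, |P z - u| ^ 2 := by
            exact_mod_cast h1
        _ = (S.card : ℝ) * ∑ z ∈ S, (P z - u) ^ 2 := by
            congr 1; exact Finset.sum_congr rfl fun z _ => sq_abs _
        _ ≤ (m : ℝ) * ∑ z ∈ S, (P z - u) ^ 2 := by
            apply mul_le_mul_of_nonneg_right hcard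
            exact Finset.sum_nonneg fun z _ => sq_nonneg _
    have hA0 : 0 ≤ A := Finset.sum_nonneg fun z _ => sq_nonneg _
    have hB0 : 0 ≤ B := Finset.sum_nonneg fun z _ => by positivity
    have htB : u * t ≤ B := by rw [ht, hB, Finset.mul_sum]
    clear_value s t A B
    rw [hsplit]
    have hmu : (m : ℝ) * u = 1 := by rw [hu]; field_simp
    rcases le_or_gt (ε ^ 2 / 4) t with hcase | hcase
    · have h1 : u * (ε ^ 2 / 4) ≤ u * t := mul_le_mul_of_nonneg_left hcase hu0.le
      linarith
    · have hee : ε ^ 2 ≤ 2 * ε := by nlinarith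
      have hsε : ε / 2 ≤ s := by linarith
      have hss : ε ^ 2 / 4 ≤ s ^ 2 := by
        have h1 : (ε/2) * (ε/2) ≤ s * s := mul_self_le_mul_self (by positivity) hsε
        calc ε ^ 2 / 4 = (ε/2) * (ε/2) := by ring
          _ ≤ s * s := h1
          _ = s ^ 2 := by ring
      have hsA : ε ^ 2 / 4 * u ≤ A := by
        calc ε ^ 2 / 4 * u ≤ s ^ 2 * u := mul_le_mul_of_nonneg_right hss hu0.le
          _ ≤ (m * A) * u := mul_le_mul_of_nonneg_right hCS hu0.le
          _ = A * (m * u) := by ring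
          _ = A := by rw [hmu, mul_one]
      linarith
  -- combine
  have hlhs : ∑ z, (u * P z + u * (P z - u) + min ((P z - u)^2) (u * |P z - u|))
      = u + M := by
    rw [Finset.sum_add_distrib, Finset.sum_add_distrib, ← Finset.mul_sum,
      ← Finset.mul_sum, hPsum, hδ, hM]
    ring
  rw [hlhs] at hsum
  have : (1 + ε ^ 2 / 4) / m = u + ε ^ 2 / 4 * u := by rw [hu]; ring
  linarith [this ▸ le_refl ((1 + ε ^ 2 / 4) / m), hsum, hMbound]
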